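/- For every integer n ≥ 2 and all integers i,j ≥ 0 with i + j > 0: the function σ_{i,j} has a zero in the interval (0,1] if and only if j = 0 and i ≥ 1, and in that case its unique zero in (0,1] is λ_i(n) = n(n−1) / ( i(i+n−1)(2n−1) − n(n−1) ). -/

import Mathlib

theorem stmt_13
    (n : ℕ) (hn : 2 ≤ n)
    (σ : ℕ → ℕ → ℝ → ℝ)
    (hσ : ∀ (i j : ℕ) (l : ℝ), 0 < l →
      σ i j l = (1 / l) * ((j : ℝ) * ((j : ℝ) + (n : ℝ) - 1) -
        (n : ℝ) * ((n : ℝ) - 1) / (2 * (n : ℝ) - 1)) +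
        (i : ℝ) * ((i : ℝ) + (n : ℝ) - 1) - (n : ℝ) * ((n : ℝ) - 1) / (2 * (n : ℝ) - 1)) :
    ∀ i j : ℕ, 0 < i + j →
      ((∃ l : ℝ, 0 < l ∧ l ≤ 1 ∧ σ i j l = 0) ↔ (j = 0 ∧ 1 ≤ i)) ∧
      (j = 0 → 1 ≤ i → ∀ l : ℝ, 0 < l → l ≤ 1 →
        (σ i j l = 0 ↔
          l = (n : ℝ) * ((n : ℝ) - 1) /
            ((i : ℝ) * ((i : ℝ) + (n : ℝ) - 1) * (2 * (n : ℝ) - 1) -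
              (n : ℝ) * ((n : ℝ) - 1)))) := by
  intro i j hij
  have hN : (2:ℝ) ≤ (n:ℝ) := by exact_mod_cast hn
  have hd : (0:ℝ) < 2*(n:ℝ)-1 := by linarith
  have hcpos : (0:ℝ) < (n:ℝ)*((n:ℝ)-1) := by nlinarith
  -- key fact for i ≥ 1
  have key : ∀ i : ℕ, 1 ≤ i →
      (n:ℝ)*((n:ℝ)-1) < (i:ℝ)*((i:ℝ)+(n:ℝ)-1)*(2*(n:ℝ)-1) - (n:ℝ)*((n:ℝ)-1) := by
    intro i hi
    have hi' : (1:ℝ) ≤ (i:ℝ) := by exact_mod_cast hi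
    nlinarith [mul_le_mul_of_nonneg_right hi' (le_of_lt hd)]
  have keyiff : ∀ i : ℕ, 1 ≤ i → ∀ l : ℝ, 0 < l →
      (σ i 0 l = 0 ↔ l = (n:ℝ)*((n:ℝ)-1) /
        ((i:ℝ)*((i:ℝ)+(n:ℝ)-1)*(2*(n:ℝ)-1) - (n:ℝ)*((n:ℝ)-1))) := by
    intro i hi l hl
    have hD : (0:ℝ) < (i:ℝ)*((i:ℝ)+(n:ℝ)-1)*(2*(n:ℝ)-1) - (n:ℝ)*((n:ℝ)-1) := by
      have := key i hi; linarith
    rw [hσ i 0 l hl, eq_div_iff hD.ne']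
    push_cast
    constructor
    · intro h
      field_simp [hd.ne', show (n:ℝ)*2-1 ≠ 0 by linarith] at h
      nlinarith [h]
    · intro h
      field_simp [hd.ne', show (n:ℝ)*2-1 ≠ 0 by linarith]
      nlinarith [h]
  constructor
  · constructor
    · rintro ⟨l, hl0, hl1, hz⟩
      rw [hσ i j l hl0] at hz
      by_contra h
      rw [not_and_or] at h
      have hinv : (1:ℝ) ≤ 1/l := by
        exact one_le_one_div hl0 hl1
      rcases Nat.eq_zero_or_pos j with hj | hj
      · subst hj
        have hi : i = 0 := by
          rcases h with h | h
          · exact absurd rfl h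
          · omega
        subst hi
        push_cast at hz
        have h1 : (1/l) * (0 * (0 + (n:ℝ) - 1) - (n:ℝ)*((n:ℝ)-1)/(2*(n:ℝ)-1)) < 0 := by
          have : (0:ℝ) < (n:ℝ)*((n:ℝ)-1)/(2*(n:ℝ)-1) := div_pos hcpos hd
          have h2 : (0:ℝ) < 1/l := by positivity
          nlinarith
        have : (0:ℝ) < (n:ℝ)*((n:ℝ)-1)/(2*(n:ℝ)-1) := div_pos hcpos hd
        nlinarith
      · -- j ≥ 1 : σ > 0 on (0,1]
        have hj' : (1:ℝ) ≤ (j:ℝ) := by exact_mod_cast hj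
        have hcd : (n:ℝ)*((n:ℝ)-1)/(2*(n:ℝ)-1) < (n:ℝ)/2 := by
          rw [div_lt_div_iff₀ hd (by norm_num : (0:ℝ) < 2)]
          nlinarith
        have hρj : (n:ℝ) ≤ (j:ℝ)*((j:ℝ)+(n:ℝ)-1) := by nlinarith
        have hA : (n:ℝ)/2 < (j:ℝ)*((j:ℝ)+(n:ℝ)-1) - (n:ℝ)*((n:ℝ)-1)/(2*(n:ℝ)-1) := by
          linarith
        have hApos : (0:ℝ) ≤ (j:ℝ)*((j:ℝ)+(n:ℝ)-1) - (n:ℝ)*((n:ℝ)-1)/(2*(n:ℝ)-1) := by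
          linarith
        have hB : (j:ℝ)*((j:ℝ)+(n:ℝ)-1) - (n:ℝ)*((n:ℝ)-1)/(2*(n:ℝ)-1) ≤
            (1/l) * ((j:ℝ)*((j:ℝ)+(n:ℝ)-1) - (n:ℝ)*((n:ℝ)-1)/(2*(n:ℝ)-1)) := by
          nlinarith
        have hρi : (0:ℝ) ≤ (i:ℝ)*((i:ℝ)+(n:ℝ)-1) := by
          have h0 : (0:ℝ) ≤ (i:ℝ) := Nat.cast_nonneg i
          nlinarith
        linarith
    · rintro ⟨hj, hi⟩
      subst hj
      set D := (i:ℝ)*((i:ℝ)+(n:ℝ)-1)*(2*(n:ℝ)-1) - (n:ℝ)*((n:ℝ)-1) with hDdef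
      have hkey := key i hi
      have hD : (0:ℝ) < D := by linarith
      refine ⟨(n:ℝ)*((n:ℝ)-1)/D, div_pos hcpos hD, ?_, ?_⟩
      · rw [div_le_one hD]; linarith
      · exact (keyiff i hi _ (div_pos hcpos hD)).mpr rfl
  · intro hj hi l hl0 _
    subst hj
    exact keyiff i hi l hl0
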